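/- Let s ≥ k ≥ 1 be integers and let G be a finite (s,k)-unbreakable graph with |V(G)| ≥ (2s)^{k+2}. Then every tree decomposition of G in which every adhesion has size < k has exactly one bag of size ≥ 2s. -/

import Mathlib

open Finset SimpleGraph

variable {V : Type} [Fintype V] [DecidableEq V]

/-- `(A, B)` is a vertex cut of `G`. -/
def IsVertexCut (G : SimpleGraph V) (A B : Finset V) : Prop :=
  A ∪ B = Finset.univ ∧
  ∀ u v : V, u ∈ A → u ∉ B → v ∈ B → v ∉ A → ¬ G.Adj u v

/-- `G` is `(s, k)`-unbreakable: there is no vertex cut `(A, B)` of `G` of order `< k` with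
`|A| ≥ s` and `|B| ≥ s`. -/
def GraphUnbreakable (G : SimpleGraph V) (s k : ℕ) : Prop :=
  ¬ ∃ A B : Finset V, IsVertexCut G A B ∧ (A ∩ B).card < k ∧ s ≤ A.card ∧ s ≤ B.card

/-- `(T, bag)` is a tree decomposition of the graph `G`. -/
def IsTreeDecomp (G : SimpleGraph V) {W : Type} (T : SimpleGraph W)
    (bag : W → Finset V) : Prop :=
  T.IsTree ∧
  (∀ u v : V, G.Adj u v → ∃ t : W, u ∈ bag t ∧ v ∈ bag t) ∧
  (∀ v : V, (T.induce {t : W | v ∈ bag t}).Connected)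

set_option linter.unusedSectionVars false
set_option maxHeartbeats 1000000

section Aux

open scoped Classical

variable {W : Type} [Fintype W]

/-- transport of a predicate along walks -/
lemma walk_preserve {G : SimpleGraph W} (P : W → Prop)
    (h : ∀ x y, G.Adj x y → P x → P y) {x w : W} (hr : G.Reachable x w) (hx : P x) : P w := by
  obtain ⟨p⟩ := hr
  induction p with
  | nil => exact hx
  | cons ha p ih => exact ih (h _ _ ha hx)

lemma del_adj (T : SimpleGraph W) (e : Sym2 W) (x y : W) :
    (T \ fromEdgeSet {e}).Adj x y ↔ T.Adj x y ∧ s(x,y) ≠ e := by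
  simp only [sdiff_adj, fromEdgeSet_adj, Set.mem_singleton_iff, not_and, not_ne_iff]
  constructor
  · rintro ⟨h1, h2⟩
    exact ⟨h1, fun he => h1.ne (h2 he)⟩
  · rintro ⟨h1, h2⟩
    exact ⟨h1, fun he => absurd he h2⟩

/-- the side of `b` when the tree edge `ab` is removed -/
noncomputable def gside (T : SimpleGraph W) (a b : W) : Finset W :=
  Finset.univ.filter (fun w => (T \ fromEdgeSet {s(a,b)}).Reachable b w)

lemma mem_gside {T : SimpleGraph W} {a b w : W} :
    w ∈ gside T a b ↔ (T \ fromEdgeSet {s(a,b)}).Reachable b w := by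
  simp [gside]

lemma self_mem_gside (T : SimpleGraph W) (a b : W) : b ∈ gside T a b :=
  mem_gside.mpr (Reachable.refl b)

lemma gside_step {T : SimpleGraph W} {a b x y : W} (hxy : T.Adj x y)
    (hne : s(x,y) ≠ s(a,b)) (hx : x ∈ gside T a b) : y ∈ gside T a b :=
  mem_gside.mpr ((mem_gside.mp hx).trans ((del_adj T _ x y).mpr ⟨hxy, hne⟩).reachable)

/-- sides of an edge of an acyclic graph are disjoint -/
lemma gside_disj {T : SimpleGraph W} (hT : T.IsAcyclic) {a b w : W} (hab : T.Adj a b)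
    (h1 : w ∈ gside T a b) (h2 : w ∈ gside T b a) : False := by
  have hb : (T \ fromEdgeSet {s(a,b)}).Reachable b w := mem_gside.mp h1
  have ha : (T \ fromEdgeSet {s(a,b)}).Reachable a w := by
    have := mem_gside.mp h2
    rwa [Sym2.eq_swap] at this
  have hbr := (isAcyclic_iff_forall_adj_isBridge.mp hT hab)
  exact hbr (ha.trans hb.symm)

/-- sides of an edge cover the whole tree -/
lemma gside_cover {T : SimpleGraph W} (hT : T.Connected) {a b : W} (hab : T.Adj a b)
    (w : W) : w ∈ gside T a b ∨ w ∈ gside T b a := by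
  refine walk_preserve (fun w => w ∈ gside T a b ∨ w ∈ gside T b a) ?_ (hT b w)
    (Or.inl (self_mem_gside T a b))
  rintro x y hxy (hx | hx)
  · by_cases he : s(x,y) = s(a,b)
    · rcases Sym2.eq_iff.mp he with ⟨h1, h2⟩ | ⟨h1, h2⟩
      · exact Or.inl (h2 ▸ self_mem_gside T a b)
      · exact Or.inr (h2 ▸ self_mem_gside T b a)
    · exact Or.inl (gside_step hxy he hx)
  · by_cases he : s(x,y) = s(b,a)
    · rcases Sym2.eq_iff.mp he with ⟨h1, h2⟩ | ⟨h1, h2⟩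
      · exact Or.inr (h2 ▸ self_mem_gside T b a)
      · exact Or.inl (h2 ▸ self_mem_gside T a b)
    · exact Or.inr (gside_step hxy he hx)

/-- nesting: if `a–b` and `b–c` are edges with `a ≠ c` then the `c`-side of `bc`
is contained in the `b`-side of `ab`. -/
lemma gside_nest {T : SimpleGraph W} (hT : T.IsAcyclic) {a b c : W}
    (hab : T.Adj a b) (hbc : T.Adj b c) (hac : a ≠ c) :
    gside T b c ⊆ gside T a b := by
  have hbcab : s(b,c) ≠ s(a,b) := by
    intro h
    rcases Sym2.eq_iff.mp h with ⟨h1, h2⟩ | ⟨h1, h2⟩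
    · exact hab.ne h1.symm
    · exact hac (h2.symm)
  intro w hw
  have hw' : (T \ fromEdgeSet {s(b,c)}).Reachable c w := mem_gside.mp hw
  have hbridge := (isAcyclic_iff_forall_adj_isBridge.mp hT hbc)
  have key : ∀ u, (T \ fromEdgeSet {s(b,c)}).Reachable c u →
      (u ∈ gside T a b ∧ (T \ fromEdgeSet {s(b,c)}).Reachable c u) := by
    intro u hru
    refine walk_preserve (fun u => u ∈ gside T a b ∧ (T \ fromEdgeSet {s(b,c)}).Reachable c u)
      ?_ hru ⟨gside_step hbc hbcab (self_mem_gside T a b), Reachable.refl c⟩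
    rintro x y hxy ⟨hx1, hx2⟩
    have hxy' := (del_adj T _ x y).mp hxy
    refine ⟨?_, hx2.trans hxy.reachable⟩
    by_cases he : s(x,y) = s(a,b)
    · rcases Sym2.eq_iff.mp he with ⟨h1, h2⟩ | ⟨h1, h2⟩
      · exact h2 ▸ self_mem_gside T a b
      · exact absurd (h1 ▸ hx2).symm hbridge
    · exact gside_step hxy'.1 he hx1
  exact (key w hw').1

lemma not_self_mem_gside {T : SimpleGraph W} (hT : T.IsAcyclic) {b c : W}
    (hbc : T.Adj b c) : b ∉ gside T b c := by
  intro hb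
  exact (isAcyclic_iff_forall_adj_isBridge.mp hT hbc) (mem_gside.mp hb).symm

/-- every vertex other than `b` lies in the side of some neighbour of `b` -/
lemma gside_of_ne {T : SimpleGraph W} (hT : T.IsTree) {b w : W} (hbw : b ≠ w) :
    ∃ c, T.Adj b c ∧ w ∈ gside T b c := by
  obtain ⟨p⟩ := hT.isConnected b w
  obtain ⟨q, hq⟩ := p.toPath
  cases q with
  | nil => exact absurd rfl hbw
  | @cons _ c _ h q =>
    refine ⟨c, h, mem_gside.mpr ⟨q.transfer _ ?_⟩⟩
    intro e he
    have heT := q.edges_subset_edgeSet he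
    have hbs : b ∉ q.support := ((Walk.cons_isPath_iff h q).mp hq).2
    simp only [edgeSet_sdiff, edgeSet_fromEdgeSet, edgeSet_sdiff_sdiff_isDiag, Set.mem_diff,
      Set.mem_singleton_iff]
    refine ⟨heT, fun h' => hbs ?_⟩
    subst h'
    exact q.fst_mem_support_of_mem_edges he

/-- crossing lemma: a vertex appearing in bags on both sides of a tree edge
appears in both endpoint bags. -/
lemma crossing {T : SimpleGraph W} (hT : T.IsAcyclic) (bag : W → Finset V)
    {a b w1 w2 : W} {v : V} (hab : T.Adj a b)
    (hw1 : w1 ∈ gside T b a) (hw2 : w2 ∈ gside T a b)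
    (hv1 : v ∈ bag w1) (hv2 : v ∈ bag w2)
    (htrace : (T.induce {t : W | v ∈ bag t}).Connected) :
    v ∈ bag a ∧ v ∈ bag b := by
  set S : Set W := {t : W | v ∈ bag t} with hS
  have hr : (T.induce S).Reachable ⟨w1, hv1⟩ ⟨w2, hv2⟩ := htrace ⟨w1, hv1⟩ ⟨w2, hv2⟩
  have key := walk_preserve
    (G := T.induce S)
    (fun x => x.1 ∈ gside T b a ∨ (v ∈ bag a ∧ v ∈ bag b)) ?_ hr (Or.inl hw1)
  · rcases key with hk | hk
    · exact absurd hw2 (fun h2 => gside_disj hT hab h2 hk)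
    · exact hk
  · rintro x y hxy (hx | hx)
    · have hxy' : T.Adj x.1 y.1 := hxy
      by_cases he : s(x.1, y.1) = s(b,a)
      · rcases Sym2.eq_iff.mp he with ⟨h1, h2⟩ | ⟨h1, h2⟩
        · exact Or.inr ⟨h2 ▸ y.2, h1 ▸ x.2⟩
        · exact Or.inr ⟨h1 ▸ x.2, h2 ▸ y.2⟩
      · exact Or.inl (gside_step hxy' he hx)
    · exact Or.inr hx

variable (T : SimpleGraph W) (bag : W → Finset V)

/-- the set of vertices in bags on the `b` side of the edge `ab` -/
noncomputable def dside (a b : W) : Finset V :=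
  Finset.univ.filter (fun v => ∃ w ∈ gside T a b, v ∈ bag w)

lemma mem_dside {a b : W} {v : V} :
    v ∈ dside T bag a b ↔ ∃ w ∈ gside T a b, v ∈ bag w := by
  simp [dside]

lemma bag_subset_dside {a b w : W} (hw : w ∈ gside T a b) : bag w ⊆ dside T bag a b :=
  fun v hv => (mem_dside T bag).mpr ⟨w, hw, hv⟩

lemma exists_bag (G : SimpleGraph V) (hTD : IsTreeDecomp G T bag) (v : V) :
    ∃ w, v ∈ bag w := by
  obtain ⟨⟨w, hw⟩⟩ := (hTD.2.2 v).nonempty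
  exact ⟨w, hw⟩

/-- the fundamental cut of a tree-decomposition edge -/
lemma tree_edge_cut (G : SimpleGraph V) (hTD : IsTreeDecomp G T bag)
    {a b : W} (hab : T.Adj a b) :
    IsVertexCut G (dside T bag b a) (dside T bag a b) ∧
      dside T bag b a ∩ dside T bag a b ⊆ bag a ∩ bag b := by
  obtain ⟨hT, hedge, htrace⟩ := hTD
  refine ⟨⟨?_, ?_⟩, ?_⟩
  · apply Finset.eq_univ_of_forall
    intro v
    obtain ⟨w, hw⟩ := exists_bag T bag G ⟨hT, hedge, htrace⟩ v
    rcases gside_cover hT.isConnected hab w with h | h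
    · exact Finset.mem_union_right _ ((mem_dside T bag).mpr ⟨w, h, hw⟩)
    · exact Finset.mem_union_left _ ((mem_dside T bag).mpr ⟨w, h, hw⟩)
  · intro u v hu hu' hv hv' hadj
    obtain ⟨t, hut, hvt⟩ := hedge u v hadj
    rcases gside_cover hT.isConnected hab t with h | h
    · exact hu' ((mem_dside T bag).mpr ⟨t, h, hut⟩)
    · exact hv' ((mem_dside T bag).mpr ⟨t, h, hvt⟩)
  · intro v hv
    obtain ⟨hv1, hv2⟩ := Finset.mem_inter.mp hv
    obtain ⟨w1, hw1, hvw1⟩ := (mem_dside T bag).mp hv1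
    obtain ⟨w2, hw2, hvw2⟩ := (mem_dside T bag).mp hv2
    have := crossing hT.IsAcyclic bag hab hw1 hw2 hvw1 hvw2 (htrace v)
    exact Finset.mem_inter.mpr this

/-- at most one side of a tree-decomposition edge has `≥ s` vertices -/
lemma side_small (G : SimpleGraph V) {s k : ℕ} (hunb : GraphUnbreakable G s k)
    (hTD : IsTreeDecomp G T bag)
    (hadh : ∀ a b : W, T.Adj a b → (bag a ∩ bag b).card < k)
    {a b : W} (hab : T.Adj a b) :
    ¬ (s ≤ (dside T bag a b).card ∧ s ≤ (dside T bag b a).card) := by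
  rintro ⟨h1, h2⟩
  obtain ⟨hcut, hinter⟩ := tree_edge_cut T bag G hTD hab
  exact hunb ⟨dside T bag b a, dside T bag a b, hcut,
    lt_of_le_of_lt (Finset.card_le_card hinter) (hadh a b hab), h2, h1⟩


lemma piece_closed (G : SimpleGraph V) (hTD : IsTreeDecomp G T bag) {b c : W}
    (hbc : T.Adj b c) {u v : V} (hu : u ∈ dside T bag b c) (hub : u ∉ bag b)
    (hadj : G.Adj u v) : v ∈ dside T bag b c := by
  obtain ⟨hT, hedge, htrace⟩ := hTD
  obtain ⟨w, hw, huw⟩ := (mem_dside T bag).mp hu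
  obtain ⟨t, hut, hvt⟩ := hedge u v hadj
  rcases gside_cover hT.isConnected hbc t with h | h
  · exact (mem_dside T bag).mpr ⟨t, h, hvt⟩
  · exact absurd (crossing hT.IsAcyclic bag hbc h hw hut huw (htrace u)).1 hub

lemma adh_subset (G : SimpleGraph V) (hTD : IsTreeDecomp G T bag) {b c : W}
    (hbc : T.Adj b c) : dside T bag b c ∩ bag b ⊆ bag b ∩ bag c := by
  intro v hv
  obtain ⟨hv1, hv2⟩ := Finset.mem_inter.mp hv
  obtain ⟨w, hw, hvw⟩ := (mem_dside T bag).mp hv1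
  exact Finset.mem_inter.mpr
    (crossing hTD.1.IsAcyclic bag hbc (self_mem_gside T c b) hw hv2 hvw (hTD.2.2 v))

lemma piece_disj (G : SimpleGraph V) (hTD : IsTreeDecomp G T bag) {b c c' : W}
    (hbc : T.Adj b c) (hbc' : T.Adj b c') (hcc' : c ≠ c') {v : V}
    (hv : v ∈ dside T bag b c) (hvb : v ∉ bag b) (hv' : v ∈ dside T bag b c') : False := by
  obtain ⟨w, hw, hvw⟩ := (mem_dside T bag).mp hv
  obtain ⟨w', hw', hvw'⟩ := (mem_dside T bag).mp hv'
  have hsub : gside T b c' ⊆ gside T c b :=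
    gside_nest hTD.1.IsAcyclic hbc.symm hbc' hcc'
  exact hvb (crossing hTD.1.IsAcyclic bag hbc (hsub hw') hw hvw' hvw (hTD.2.2 v)).1

lemma greedy {ι : Type} [DecidableEq ι] (F : Finset ι) (f : ι → Finset V) {s : ℕ}
    (hs1 : 1 ≤ s) (hsmall : ∀ i ∈ F, (f i).card < s) (htot : s ≤ (F.biUnion f).card) :
    ∃ C ⊆ F, s ≤ (C.biUnion f).card ∧ (C.biUnion f).card < 2 * s := by
  have hne : (F.powerset.filter (fun C => s ≤ (C.biUnion f).card)).Nonempty :=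
    ⟨F, Finset.mem_filter.mpr ⟨Finset.mem_powerset.mpr (Finset.Subset.refl F), htot⟩⟩
  obtain ⟨C, hC, hmin⟩ := Finset.exists_min_image _ Finset.card hne
  rw [Finset.mem_filter, Finset.mem_powerset] at hC
  obtain ⟨hCF, hCs⟩ := hC
  have hCne : C.Nonempty := by
    rcases Finset.eq_empty_or_nonempty C with rfl | h
    · simp at hCs; omega
    · exact h
  obtain ⟨i, hi⟩ := hCne
  have herase : ((C.erase i).biUnion f).card < s := by
    by_contra h
    push_neg at h
    have h1 : C.card ≤ (C.erase i).card := hmin _ (by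
      rw [Finset.mem_filter, Finset.mem_powerset]
      exact ⟨(Finset.erase_subset _ _).trans hCF, h⟩)
    have h2 := Finset.card_erase_lt_of_mem hi
    omega
  have hsub : C.biUnion f ⊆ (C.erase i).biUnion f ∪ f i := by
    intro v hv
    obtain ⟨j, hj, hvj⟩ := Finset.mem_biUnion.mp hv
    by_cases hji : j = i
    · exact Finset.mem_union_right _ (hji ▸ hvj)
    · exact Finset.mem_union_left _
        (Finset.mem_biUnion.mpr ⟨j, Finset.mem_erase.mpr ⟨hji, hj⟩, hvj⟩)
  have hle : (C.biUnion f).card ≤ ((C.erase i).biUnion f).card + (f i).card :=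
    le_trans (Finset.card_le_card hsub) (Finset.card_union_le _ _)
  have hfi := hsmall i (hCF hi)
  exact ⟨C, hCF, hCs, by omega⟩

lemma count_small_subsets (B : Finset V) {s k : ℕ} (hk : 1 ≤ k) (hks : k ≤ s)
    (hB : B.card < 2 * s) :
    ((B.powerset).filter (fun A => A.card < k)).card ≤ (2*s)^k := by
  have hsub : (B.powerset).filter (fun A => A.card < k) ⊆
      (Finset.range k).biUnion (fun j => B.powersetCard j) := by
    intro A hA
    rw [Finset.mem_filter, Finset.mem_powerset] at hA
    exact Finset.mem_biUnion.mpr ⟨A.card, Finset.mem_range.mpr hA.2,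
      (Finset.mem_powersetCard).mpr ⟨hA.1, rfl⟩⟩
  calc ((B.powerset).filter (fun A => A.card < k)).card
      ≤ ((Finset.range k).biUnion (fun j => B.powersetCard j)).card :=
        Finset.card_le_card hsub
    _ ≤ ∑ j ∈ Finset.range k, (B.powersetCard j).card := Finset.card_biUnion_le
    _ ≤ ∑ _j ∈ Finset.range k, (2*s)^(k-1) := by
        apply Finset.sum_le_sum
        intro j hj
        rw [Finset.card_powersetCard]
        calc B.card.choose j ≤ B.card ^ j := Nat.choose_le_pow _ _
          _ ≤ (2*s)^j := Nat.pow_le_pow_left (by omega) _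
          _ ≤ (2*s)^(k-1) := Nat.pow_le_pow_right (by omega)
              (by have := Finset.mem_range.mp hj; omega)
    _ = k * (2*s)^(k-1) := by rw [Finset.sum_const, Finset.card_range, smul_eq_mul]
    _ ≤ (2*s) * (2*s)^(k-1) := Nat.mul_le_mul_right _ (by omega)
    _ = (2*s)^k := by
        rw [← pow_succ']
        congr 1
        omega


end Aux

/-- Let `s ≥ k ≥ 1` and let `G` be an `(s,k)`-unbreakable graph with at least `(2s)^(k+2)`
vertices. Then every tree decomposition of `G` all of whose adhesions have size `< k` has
exactly one bag of size at least `2s`. -/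

theorem unique_big_bag {W : Type} [Fintype W] (G : SimpleGraph V) (s k : ℕ)
    (hk : 1 ≤ k) (hsk : k ≤ s)
    (hunb : GraphUnbreakable G s k)
    (hV : (2 * s) ^ (k + 2) ≤ Fintype.card V)
    (T : SimpleGraph W) (bag : W → Finset V)
    (hTD : IsTreeDecomp G T bag)
    (hadh : ∀ a b : W, T.Adj a b → (bag a ∩ bag b).card < k) :
    ∃! t : W, 2 * s ≤ (bag t).card := by
  classical
  have hs1 : 1 ≤ s := le_trans hk hsk
  have hVpos : 0 < Fintype.card V := lt_of_lt_of_le (by positivity) hV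
  -- uniqueness of a big bag
  have huniq : ∀ t1 t2 : W, 2 * s ≤ (bag t1).card → 2 * s ≤ (bag t2).card → t1 = t2 := by
    intro t1 t2 h1 h2
    by_contra hne
    obtain ⟨c, hc, ht2⟩ := gside_of_ne hTD.1 hne
    have hA : s ≤ (dside T bag t1 c).card := by
      have := Finset.card_le_card (bag_subset_dside T bag ht2)
      omega
    have hB : s ≤ (dside T bag c t1).card := by
      have := Finset.card_le_card (bag_subset_dside T bag (self_mem_gside T c t1))
      omega
    exact side_small T bag G hunb hTD hadh hc ⟨hA, hB⟩
  -- existence of a big bag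
  have hex : ∃ t : W, 2 * s ≤ (bag t).card := by
    by_contra hbig
    push_neg at hbig
    obtain ⟨v0⟩ : Nonempty V := Fintype.card_pos_iff.mp hVpos
    obtain ⟨w0, hw0⟩ := exists_bag T bag G hTD v0
    -- find a sink node b : all sides of b are small
    obtain ⟨b, hsink⟩ : ∃ b : W, ∀ c, T.Adj b c → (dside T bag b c).card < s := by
      by_cases hpair : ∃ p : W × W, T.Adj p.1 p.2 ∧ s ≤ (dside T bag p.1 p.2).card
      · have hne : (Finset.univ.filter
            (fun p : W × W => T.Adj p.1 p.2 ∧ s ≤ (dside T bag p.1 p.2).card)).Nonempty := by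
          obtain ⟨p, hp⟩ := hpair
          exact ⟨p, Finset.mem_filter.mpr ⟨Finset.mem_univ _, hp⟩⟩
        obtain ⟨p, hp, hmin⟩ :=
          Finset.exists_min_image _ (fun p : W × W => (gside T p.1 p.2).card) hne
        obtain ⟨-, hadjp, hps⟩ := Finset.mem_filter.mp hp
        refine ⟨p.2, fun c hc => ?_⟩
        by_contra hcs
        push_neg at hcs
        by_cases hca : c = p.1
        · subst hca
          exact side_small T bag G hunb hTD hadh hadjp ⟨hps, hcs⟩
        · have hmem : (p.2, c) ∈ Finset.univ.filter
              (fun p : W × W => T.Adj p.1 p.2 ∧ s ≤ (dside T bag p.1 p.2).card) :=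
            Finset.mem_filter.mpr ⟨Finset.mem_univ _, hc, hcs⟩
          have hle := hmin _ hmem
          have hsubs : gside T p.2 c ⊆ gside T p.1 p.2 :=
            gside_nest hTD.1.IsAcyclic hadjp hc (fun h => hca h.symm)
          have hss : gside T p.2 c ⊂ gside T p.1 p.2 :=
            Finset.ssubset_def.mpr ⟨hsubs, fun h =>
              not_self_mem_gside hTD.1.IsAcyclic hc (h (self_mem_gside T p.1 p.2))⟩
          have := Finset.card_lt_card hss
          simp only [] at hle
          omega
      · push_neg at hpair
        exact ⟨w0, fun c hc => hpair (w0, c) hc⟩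
    -- group the sides of b by their adhesion
    have hUAsmall : ∀ A : Finset V, A ⊆ bag b → A.card < k →
        (((Finset.univ.filter (fun c => T.Adj b c ∧ dside T bag b c ∩ bag b = A)).biUnion
          (fun c => dside T bag b c \ bag b)).card < s) := by
      intro A hAbag hAk
      by_contra hUAs
      push_neg at hUAs
      obtain ⟨C, hCsub, hCs, hC2s⟩ := greedy _ (fun c => dside T bag b c \ bag b) hs1
        (fun i hi => by
          have hadji : T.Adj b i := ((Finset.mem_filter.mp hi).2).1
          have h1 : dside T bag b i \ bag b ⊆ dside T bag b i := Finset.sdiff_subset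
          have := Finset.card_le_card h1
          have := hsink i hadji
          show (dside T bag b i \ bag b).card < s
          omega) hUAs
      set U := C.biUnion (fun c => dside T bag b c \ bag b) with hU
      have hcut : IsVertexCut G (U ∪ A) (Finset.univ \ U) := by
        constructor
        · apply Finset.eq_univ_of_forall
          intro v
          by_cases hvU : v ∈ U
          · exact Finset.mem_union_left _ (Finset.mem_union_left _ hvU)
          · exact Finset.mem_union_right _ (Finset.mem_sdiff.mpr ⟨Finset.mem_univ v, hvU⟩)
        · intro u v hu hu' hv hv' hadj
          have huU : u ∈ U := by
            by_contra h
            exact hu' (Finset.mem_sdiff.mpr ⟨Finset.mem_univ _, h⟩)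
          obtain ⟨c, hcC, hupc⟩ := Finset.mem_biUnion.mp huU
          obtain ⟨-, hcadj, hcadh⟩ := Finset.mem_filter.mp (hCsub hcC)
          obtain ⟨hu1, hu2⟩ := Finset.mem_sdiff.mp hupc
          have hvd : v ∈ dside T bag b c := piece_closed T bag G hTD hcadj hu1 hu2 hadj
          by_cases hvb : v ∈ bag b
          · have hvA : v ∈ A := hcadh ▸ Finset.mem_inter.mpr ⟨hvd, hvb⟩
            exact hv' (Finset.mem_union_right _ hvA)
          · have hvp : v ∈ dside T bag b c \ bag b := Finset.mem_sdiff.mpr ⟨hvd, hvb⟩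
            exact hv' (Finset.mem_union_left _ (Finset.mem_biUnion.mpr ⟨c, hcC, hvp⟩))
      have horder : ((U ∪ A) ∩ (Finset.univ \ U)).card < k := by
        have hsubA : (U ∪ A) ∩ (Finset.univ \ U) ⊆ A := by
          intro x hx
          obtain ⟨hx1, hx2⟩ := Finset.mem_inter.mp hx
          rcases Finset.mem_union.mp hx1 with h | h
          · exact absurd h (Finset.mem_sdiff.mp hx2).2
          · exact h
        exact lt_of_le_of_lt (Finset.card_le_card hsubA) hAk
      have hXcard : s ≤ (U ∪ A).card :=
        le_trans hCs (Finset.card_le_card Finset.subset_union_left)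
      have hYcard : s ≤ (Finset.univ \ U).card := by
        rw [Finset.card_sdiff_of_subset (Finset.subset_univ _), Finset.card_univ]
        have h3 : 3 * s ≤ (2*s)^(k+2) := by
          have hss : s ≤ s^3 := Nat.le_self_pow (by norm_num) s
          have h8 : 3 * s ≤ (2*s)^3 := by nlinarith
          exact le_trans h8 (Nat.pow_le_pow_right (by omega) (by omega))
        omega
      exact hunb ⟨U ∪ A, Finset.univ \ U, hcut, horder, hXcard, hYcard⟩
    -- coverage of V by the bag of b together with the grouped pieces
    set nb := Finset.univ.filter (fun c => T.Adj b c) with hnb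
    set Ts := nb.image (fun c => dside T bag b c ∩ bag b) with hTs
    have hcov : (Finset.univ : Finset V) ⊆ bag b ∪ Ts.biUnion
        (fun A => (Finset.univ.filter
          (fun c => T.Adj b c ∧ dside T bag b c ∩ bag b = A)).biUnion
          (fun c => dside T bag b c \ bag b)) := by
      intro v _
      obtain ⟨w, hw⟩ := exists_bag T bag G hTD v
      by_cases hvb : v ∈ bag b
      · exact Finset.mem_union_left _ hvb
      · have hwb : b ≠ w := by rintro rfl; exact hvb hw
        obtain ⟨c, hc, hwc⟩ := gside_of_ne hTD.1 hwb
        have hcnb : c ∈ nb := Finset.mem_filter.mpr ⟨Finset.mem_univ _, hc⟩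
        have hvp : v ∈ dside T bag b c \ bag b :=
          Finset.mem_sdiff.mpr ⟨(mem_dside T bag).mpr ⟨w, hwc, hw⟩, hvb⟩
        refine Finset.mem_union_right _ (Finset.mem_biUnion.mpr
          ⟨dside T bag b c ∩ bag b, Finset.mem_image_of_mem _ hcnb,
           Finset.mem_biUnion.mpr ⟨c, Finset.mem_filter.mpr ⟨Finset.mem_univ _, hc, rfl⟩, hvp⟩⟩)
    have hTscard : Ts.card ≤ (2*s)^k := by
      have hsub : Ts ⊆ (bag b).powerset.filter (fun A => A.card < k) := by
        intro A hA
        obtain ⟨c, hcnb, rfl⟩ := Finset.mem_image.mp hA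
        have hcadj : T.Adj b c := (Finset.mem_filter.mp hcnb).2
        refine Finset.mem_filter.mpr ⟨Finset.mem_powerset.mpr Finset.inter_subset_right, ?_⟩
        exact lt_of_le_of_lt (Finset.card_le_card (adh_subset T bag G hTD hcadj))
          (hadh b c hcadj)
      exact le_trans (Finset.card_le_card hsub) (count_small_subsets _ hk hsk (hbig b))
    have hsum : (Ts.biUnion (fun A => (Finset.univ.filter
          (fun c => T.Adj b c ∧ dside T bag b c ∩ bag b = A)).biUnion
          (fun c => dside T bag b c \ bag b))).card ≤ Ts.card * s := by
      calc _ ≤ ∑ A ∈ Ts, ((Finset.univ.filter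
            (fun c => T.Adj b c ∧ dside T bag b c ∩ bag b = A)).biUnion
            (fun c => dside T bag b c \ bag b)).card := Finset.card_biUnion_le
        _ ≤ Ts.card * s := by
            rw [← smul_eq_mul]
            apply Finset.sum_le_card_nsmul
            intro A hA
            obtain ⟨c, hcnb, rfl⟩ := Finset.mem_image.mp hA
            have hcadj : T.Adj b c := (Finset.mem_filter.mp hcnb).2
            have hAbag : dside T bag b c ∩ bag b ⊆ bag b := Finset.inter_subset_right
            have hAk : (dside T bag b c ∩ bag b).card < k :=
              lt_of_le_of_lt (Finset.card_le_card (adh_subset T bag G hTD hcadj))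
                (hadh b c hcadj)
            exact le_of_lt (hUAsmall _ hAbag hAk)
    have hcount : Fintype.card V ≤ (bag b).card + Ts.card * s := by
      have h1 : (Finset.univ : Finset V).card ≤ (bag b ∪ _).card := Finset.card_le_card hcov
      calc Fintype.card V = (Finset.univ : Finset V).card := Finset.card_univ.symm
        _ ≤ _ := Finset.card_le_card hcov
        _ ≤ (bag b).card + _ := Finset.card_union_le _ _
        _ ≤ (bag b).card + Ts.card * s := by omega
    -- final contradiction
    have hbb := hbig b
    have hP2 : 2 ≤ (2*s)^k := le_trans (by omega) (Nat.le_self_pow (by omega) (2*s))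
    have hpow : (2*s)^(k+2) = (2*s)^k * (2*s)^2 := pow_add _ _ _
    have hfin : (bag b).card + (2*s)^k * s < (2*s)^(k+2) := by nlinarith
    have hTsS : Ts.card * s ≤ (2*s)^k * s := Nat.mul_le_mul_right _ hTscard
    omega
  obtain ⟨t, ht⟩ := hex
  exact ⟨t, ht, fun y hy => huniq y t hy ht⟩
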